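/- Let b ∈ ℂ and consider the complex polynomials P(x,y) = -y + (i·b/√6)·y² and Q(x,y) = x + b·x² + (5i·b/√6)·x·y − (5b/3)·y². Then the polynomial f(x,y) = 1 + (b²/3)·x² − (b²/18)·y² + (4b/3)·x + (i/3)·√(2/3)·b²·x·y + i·√(2/3)·b·y satisfies ∂f/∂x · P + ∂f/∂y · Q = K·f identically, where K(x,y) = (i/3)·b·(√6·x + 4i·y). -/

import Mathlib

set_option maxHeartbeats 2000000 in
open Complex in
/-- Darboux polynomial for the system from the component `V₇ᶜ`. -/
theorem stmt_4 (b : ℂ) :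
    ∀ x y : ℂ,
      deriv (fun x' : ℂ => 1 + (b ^ 2 / 3) * x' ^ 2 - (b ^ 2 / 18) * y ^ 2
          + (4 * b / 3) * x' + (I / 3) * (Real.sqrt (2 / 3) : ℂ) * b ^ 2 * x' * y
          + I * (Real.sqrt (2 / 3) : ℂ) * b * y) x
        * (-y + (I * b / (Real.sqrt 6 : ℂ)) * y ^ 2)
      + deriv (fun y' : ℂ => 1 + (b ^ 2 / 3) * x ^ 2 - (b ^ 2 / 18) * y' ^ 2
          + (4 * b / 3) * x + (I / 3) * (Real.sqrt (2 / 3) : ℂ) * b ^ 2 * x * y'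
          + I * (Real.sqrt (2 / 3) : ℂ) * b * y') y
        * (x + b * x ^ 2 + (5 * I * b / (Real.sqrt 6 : ℂ)) * x * y - (5 * b / 3) * y ^ 2)
      = ((I / 3) * b * ((Real.sqrt 6 : ℂ) * x + 4 * I * y))
        * (1 + (b ^ 2 / 3) * x ^ 2 - (b ^ 2 / 18) * y ^ 2
          + (4 * b / 3) * x + (I / 3) * (Real.sqrt (2 / 3) : ℂ) * b ^ 2 * x * y
          + I * (Real.sqrt (2 / 3) : ℂ) * b * y) := by
  intro x y
  set s : ℂ := (Real.sqrt 6 : ℂ) with hs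
  set t : ℂ := (Real.sqrt (2 / 3) : ℂ) with ht
  have hs2 : s ^ 2 = 6 := by
    rw [hs, ← Complex.ofReal_pow, Real.sq_sqrt (by norm_num : (6:ℝ) ≥ 0)]
    norm_num
  have hs0 : s ≠ 0 := by
    intro h
    rw [h] at hs2
    norm_num at hs2
  have hst : s * t = 2 := by
    rw [hs, ht, ← Complex.ofReal_mul, ← Real.sqrt_mul (by norm_num : (6:ℝ) ≥ 0)]
    norm_num
  clear_value s t
  have hdx : HasDerivAt (fun x' : ℂ => 1 + (b ^ 2 / 3) * x' ^ 2 - (b ^ 2 / 18) * y ^ 2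
          + (4 * b / 3) * x' + (I / 3) * t * b ^ 2 * x' * y
          + I * t * b * y)
      (0 + (b ^ 2 / 3) * (2 * x ^ 1) - 0 + (4 * b / 3) * 1
        + ((I / 3) * t * b ^ 2 * 1) * y + 0) x := by
    exact (((((hasDerivAt_const x (1:ℂ)).add
      (((hasDerivAt_pow 2 x)).const_mul (b ^ 2 / 3))).sub
      (hasDerivAt_const x ((b ^ 2 / 18) * y ^ 2))).add
      ((hasDerivAt_id x).const_mul (4 * b / 3))).add
      (((hasDerivAt_id x).const_mul ((I / 3) * t * b ^ 2)).mul_const y)).add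
      (hasDerivAt_const x (I * t * b * y))
  have hdy : HasDerivAt (fun y' : ℂ => 1 + (b ^ 2 / 3) * x ^ 2 - (b ^ 2 / 18) * y' ^ 2
          + (4 * b / 3) * x + (I / 3) * t * b ^ 2 * x * y'
          + I * t * b * y')
      (0 - (b ^ 2 / 18) * (2 * y ^ 1) + 0 + (I / 3) * t * b ^ 2 * x * 1
        + I * t * b * 1) y := by
    exact (((((hasDerivAt_const y ((1:ℂ) + (b ^ 2 / 3) * x ^ 2)).sub
      (((hasDerivAt_pow 2 y)).const_mul (b ^ 2 / 18))).add
      (hasDerivAt_const y ((4 * b / 3) * x))).add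
      ((hasDerivAt_id y).const_mul ((I / 3) * t * b ^ 2 * x))).add
      ((hasDerivAt_id y).const_mul (I * t * b)))
  rw [hdx.deriv, hdy.deriv]
  have hI : I ^ 2 = -1 := Complex.I_sq
  have e1 : I * b / s = I * b * s / 6 := by
    rw [div_eq_div_iff hs0 (by norm_num : (6:ℂ) ≠ 0)]
    linear_combination -(I * b) * hs2
  have e2 : 5 * I * b / s = 5 * (I * b * s) / 6 := by
    rw [div_eq_div_iff hs0 (by norm_num : (6:ℂ) ≠ 0)]
    linear_combination -(5 * I * b) * hs2
  have e3 : t = s / 3 := by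
    have h : s * (t * 3) = s * s := by linear_combination 3 * hst - hs2
    have h2 := mul_left_cancel₀ hs0 h
    rw [eq_div_iff (by norm_num : (3:ℂ) ≠ 0)]
    linear_combination h2
  rw [e1, e2, e3]
  linear_combination ((1/6)*b^2*x*y*I^2 + (1/54)*b^3*y^3*I^2 + (1/18)*b^3*x^2*y*I^2) * hs2
    + ((-4/3)*b*y + (-4/9)*b^2*y^2*s*I + (-7/9)*b^2*x*y + (5/27)*b^3*y^3
      + (-4/27)*b^3*x*y^2*s*I + (-1/9)*b^3*x^2*y) * hI
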